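/- Let X be a complete CAT(0) space, C ⊆ X a closed bounded convex subset, T : C → C nonexpansive, u, x ∈ C, and (λ_n) a sequence in [0,1] satisfying lim λ_n = 0, ∑|λ_{n+1} − λ_n| < ∞, and ∑ λ_n = ∞. Then the Halpern iteration x_0 = x, x_{n+1} = λ_{n+1}u ⊕ (1−λ_{n+1})Tx_n is a Cauchy sequence. -/

import Mathlib

structure WHyperbolic (X : Type*) [MetricSpace X] where
  W : X → X → ℝ → X
  W1 : ∀ (x y z : X) (l : ℝ), l ∈ Set.Icc (0:ℝ) 1 →
    dist z (W x y l) ≤ (1 - l) * dist z x + l * dist z y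
  W2 : ∀ (x y : X) (l l' : ℝ), l ∈ Set.Icc (0:ℝ) 1 → l' ∈ Set.Icc (0:ℝ) 1 →
    dist (W x y l) (W x y l') = |l - l'| * dist x y
  W3 : ∀ (x y : X) (l : ℝ), l ∈ Set.Icc (0:ℝ) 1 → W x y l = W y x (1 - l)
  W4 : ∀ (x y z w : X) (l : ℝ), l ∈ Set.Icc (0:ℝ) 1 →
    dist (W x z l) (W y w l) ≤ (1 - l) * dist x y + l * dist z w

/-- A CAT(0) space, presented as a W-hyperbolic space whose midpoints satisfy the
Bruhat–Tits CN-inequality. -/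
structure CAT0 (X : Type*) [MetricSpace X] extends WHyperbolic X where
  CN : ∀ x y z : X,
    dist z (W x y (1/2)) ^ 2 ≤ (1/2) * dist z x ^ 2 + (1/2) * dist z y ^ 2 - (1/4) * dist x y ^ 2


open Filter

section LimsupHelpers
variable {f : ℕ → ℝ} {K c : ℝ}

lemma hlp_limsup_le (hK : ∀ n, K ≤ f n) (h : ∀ᶠ n in atTop, f n ≤ c) :
    limsup f atTop ≤ c :=
  limsup_le_of_le (isCoboundedUnder_le_of_le atTop hK) h

lemma hlp_le_limsup (hK : ∀ n, f n ≤ K) (h : ∀ᶠ n in atTop, c ≤ f n) :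
    c ≤ limsup f atTop :=
  le_limsup_of_frequently_le h.frequently ⟨K, eventually_map.2 (Eventually.of_forall hK)⟩

lemma hlp_ev_lt_limsup_add (hK : ∀ n, f n ≤ K) {ε : ℝ} (hε : 0 < ε) :
    ∀ᶠ n in atTop, f n < limsup f atTop + ε := by
  refine eventually_lt_of_limsup_lt (by linarith [le_refl (limsup f atTop)]) ?_
  exact ⟨K, eventually_map.2 (Eventually.of_forall hK)⟩

/-- limsup of a convex-type combination. -/
lemma hlp_limsup_comb {A B : ℕ → ℝ} {l c kf KA KB : ℝ} (hl0 : 0 ≤ l) (hl1 : l ≤ 1)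
    (hkf : ∀ n, kf ≤ f n)
    (hKA : ∀ n, A n ≤ KA) (hKB : ∀ n, B n ≤ KB)
    (h : ∀ᶠ n in atTop, f n ≤ (1 - l) * A n + l * B n + c) :
    limsup f atTop ≤ (1 - l) * limsup A atTop + l * limsup B atTop + c := by
  refine le_of_forall_pos_le_add fun ε hε => ?_
  have hA := hlp_ev_lt_limsup_add hKA (half_pos hε)
  have hB := hlp_ev_lt_limsup_add hKB (half_pos hε)
  refine hlp_limsup_le hkf ?_
  filter_upwards [hA, hB, h] with n hA' hB' h'
  nlinarith [hA', hB', h']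
end LimsupHelpers
open Filter

namespace WHyperbolic
variable {X : Type*} [MetricSpace X] (H : WHyperbolic X)

lemma W_zero (x y : X) : H.W x y 0 = x := by
  have := H.W1 x y x 0 (by norm_num)
  simp at this
  exact this.symm

lemma W_one (x y : X) : H.W x y 1 = y := by
  have := H.W1 x y y 1 (by norm_num)
  simp at this
  exact this.symm

lemma dist_left (x y : X) {l : ℝ} (hl : l ∈ Set.Icc (0:ℝ) 1) :
    dist x (H.W x y l) = l * dist x y := by
  have h := H.W2 x y 0 l (by norm_num) hl
  rw [H.W_zero] at h
  rw [h, abs_of_nonpos (by linarith [hl.1])]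
  ring_nf

lemma dist_right (x y : X) {l : ℝ} (hl : l ∈ Set.Icc (0:ℝ) 1) :
    dist (H.W x y l) y = (1 - l) * dist x y := by
  have h := H.W2 x y l 1 hl (by norm_num)
  rw [H.W_one] at h
  rw [h, abs_of_nonpos (by linarith [hl.2])]
  ring_nf

end WHyperbolic

namespace CAT0
variable {X : Type*} [MetricSpace X] (H : CAT0 X)

lemma midpoint_unique {p q m : X} (h1 : dist p m = dist p q / 2)
    (h2 : dist q m = dist p q / 2) : m = H.W p q (1/2) := by
  have hCN := H.CN p q m
  rw [dist_comm p m] at h1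
  rw [dist_comm q m] at h2
  rw [h1, h2] at hCN
  have h0 : dist m (H.W p q (1/2)) = 0 := by
    nlinarith [dist_nonneg (x := m) (y := H.W p q (1/2))]
  exact dist_eq_zero.mp h0

lemma W_comb (x y : X) {a b : ℝ} (ha : a ∈ Set.Icc (0:ℝ) 1) (hb : b ∈ Set.Icc (0:ℝ) 1) :
    H.W x y ((a + b)/2) = H.W (H.W x y a) (H.W x y b) (1/2) := by
  have hm : (a+b)/2 ∈ Set.Icc (0:ℝ) 1 := ⟨by linarith [ha.1, hb.1], by linarith [ha.2, hb.2]⟩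
  have hpq : dist (H.W x y a) (H.W x y b) = |a - b| * dist x y := H.W2 x y a b ha hb
  refine (H.midpoint_unique ?_ ?_)
  · rw [H.W2 x y a ((a+b)/2) ha hm, hpq]
    rw [show a - (a+b)/2 = (a-b)/2 by ring, abs_div]
    simp [abs_of_nonneg]
    ring
  · rw [H.W2 x y b ((a+b)/2) hb hm, hpq]
    rw [show b - (a+b)/2 = -((a-b)/2) by ring, abs_neg, abs_div]
    simp [abs_of_nonneg]
    ring

/-- The CAT(0) convexity inequality for arbitrary parameters. -/
lemma star (x y z : X) {l : ℝ} (hl : l ∈ Set.Icc (0:ℝ) 1) :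
    dist z (H.W x y l) ^ 2 ≤
      (1 - l) * dist z x ^ 2 + l * dist z y ^ 2 - l * (1 - l) * dist x y ^ 2 := by
  set d := dist x y with hd
  set g : ℝ → ℝ := fun t => dist z (H.W x y t) ^ 2 + t * (1 - t) * d ^ 2 with hg
  have hmid : ∀ a b : ℝ, a ∈ Set.Icc (0:ℝ) 1 → b ∈ Set.Icc (0:ℝ) 1 →
      g ((a+b)/2) ≤ (g a + g b) / 2 := by
    intro a b ha hb
    have hC := H.CN (H.W x y a) (H.W x y b) z
    rw [← H.W_comb x y ha hb] at hC
    have hpq : dist (H.W x y a) (H.W x y b) = |a - b| * d := H.W2 x y a b ha hb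
    rw [hpq] at hC
    have habs : (|a - b| * d) ^ 2 = (a-b)^2 * d^2 := by
      rw [mul_pow, sq_abs]
    rw [habs] at hC
    simp only [hg]
    nlinarith [hC]
  have hdyadic : ∀ n : ℕ, ∀ k : ℕ, k ≤ 2^n →
      g ((k : ℝ)/2^n) ≤ (1 - (k:ℝ)/2^n) * g 0 + ((k:ℝ)/2^n) * g 1 := by
    intro n
    induction n with
    | zero =>
      intro k hk
      interval_cases k <;> norm_num
    | succ n ih =>
      intro k hk
      rcases Nat.even_or_odd k with ⟨j, hj⟩ | ⟨j, hj⟩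
      · have hj2 : j ≤ 2^n := by omega
        have hcast : (k : ℝ)/2^(n+1) = (j : ℝ)/2^n := by
          subst hj; push_cast; ring
        rw [hcast]; exact ih j hj2
      · have hj1 : j + 1 ≤ 2^n := by omega
        have hj0 : j ≤ 2^n := by omega
        have hmem : ∀ i : ℕ, i ≤ 2^n → ((i:ℝ)/2^n) ∈ Set.Icc (0:ℝ) 1 := by
          intro i hi
          constructor
          · positivity
          · rw [div_le_one (by positivity)]
            exact_mod_cast hi
        have h1 := hmid _ _ (hmem j hj0) (hmem (j+1) hj1)
        have h2 := ih j hj0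
        have h3 := ih (j+1) hj1
        have hkeq : (k : ℝ)/2^(n+1) = ((j:ℝ)/2^n + ((j+1:ℕ):ℝ)/2^n)/2 := by
          subst hj; push_cast; ring
        rw [hkeq]
        refine le_trans h1 ?_
        push_cast at h2 h3 ⊢
        have h2n : (0:ℝ) < 2^n := by positivity
        have e2 : ((2:ℝ)^n)⁻¹ * 2^n = 1 := inv_mul_cancel₀ (ne_of_gt h2n)
        nlinarith [h2, h3]
  have hg0 : g 0 = dist z x ^ 2 := by simp [hg, H.W_zero]
  have hg1 : g 1 = dist z y ^ 2 := by simp [hg, H.W_one]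
  set q : ℕ → ℝ := fun n => (⌊l * 2^n⌋₊ : ℝ) / 2^n with hq
  have hqk : ∀ n, (⌊l * 2^n⌋₊ : ℕ) ≤ 2^n := by
    intro n
    have hle : l * 2^n ≤ 2^n := by nlinarith [hl.2, pow_pos (show (0:ℝ) < 2 by norm_num) n]
    calc ⌊l * 2^n⌋₊ ≤ ⌊(2:ℝ)^n⌋₊ := Nat.floor_le_floor hle
      _ = 2^n := by
          rw [show ((2:ℝ)^n) = ((2^n : ℕ) : ℝ) by push_cast; ring, Nat.floor_natCast]
  have hqmem : ∀ n, q n ∈ Set.Icc (0:ℝ) 1 := by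
    intro n
    constructor
    · positivity
    · rw [div_le_one (by positivity)]
      exact_mod_cast hqk n
  have hqclose : ∀ n, |q n - l| ≤ 1 / 2^n := by
    intro n
    have h2n : (0:ℝ) < 2^n := by positivity
    have hfl : l * 2^n - 1 < (⌊l * 2^n⌋₊ : ℝ) := Nat.sub_one_lt_floor (l * 2^n)
    have hfu : (⌊l * 2^n⌋₊ : ℝ) ≤ l * 2^n := Nat.floor_le (by nlinarith [hl.1])
    have e1 : (q n) * 2^n = (⌊l*2^n⌋₊ : ℝ) := by
      simp only [hq]; field_simp
    have habs : |q n - l| * 2^n ≤ 1 := by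
      rw [← abs_of_pos h2n, ← abs_mul, sub_mul, e1, abs_le]
      constructor <;> nlinarith [hfl, hfu]
    calc |q n - l| = |q n - l| * 2^n / 2^n := by field_simp
      _ ≤ 1 / 2^n := by gcongr
  have hhalf : Filter.Tendsto (fun n : ℕ => (1:ℝ) / 2^n) Filter.atTop (nhds 0) := by
    have := tendsto_pow_atTop_nhds_zero_of_lt_one (show (0:ℝ) ≤ 1/2 by norm_num)
      (show (1:ℝ)/2 < 1 by norm_num)
    refine this.congr fun n => ?_
    rw [div_pow, one_pow]
  have hq_tendsto : Filter.Tendsto q Filter.atTop (nhds l) := by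
    have hup : ∀ n, q n ≤ l + 1/2^n := fun n => by
      have := (abs_le.mp (hqclose n)).2; linarith
    have hlo : ∀ n, l - 1/2^n ≤ q n := fun n => by
      have := (abs_le.mp (hqclose n)).1; linarith
    refine tendsto_of_tendsto_of_tendsto_of_le_of_le ?_ ?_ hlo hup
    · simpa using (tendsto_const_nhds (x := l)).sub hhalf
    · simpa using (tendsto_const_nhds (x := l)).add hhalf
  have hD_tendsto : Filter.Tendsto (fun n => dist z (H.W x y (q n)))
      Filter.atTop (nhds (dist z (H.W x y l))) := by
    have hb : ∀ n, |dist z (H.W x y (q n)) - dist z (H.W x y l)| ≤ (1/2^n) * d := by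
      intro n
      have h1 : |dist z (H.W x y (q n)) - dist z (H.W x y l)|
          ≤ dist (H.W x y (q n)) (H.W x y l) := by
        rw [dist_comm z (H.W x y (q n)), dist_comm z (H.W x y l)]
        exact abs_dist_sub_le _ _ _
      have h2 : dist (H.W x y (q n)) (H.W x y l) = |q n - l| * d := H.W2 x y _ _ (hqmem n) hl
      rw [h2] at h1
      refine h1.trans (mul_le_mul_of_nonneg_right (hqclose n) (by rw [hd]; exact dist_nonneg))
    have hup : ∀ n, dist z (H.W x y (q n)) ≤ dist z (H.W x y l) + (1/2^n)*d := fun n => by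
      have := (abs_le.mp (hb n)).2; linarith
    have hlo : ∀ n, dist z (H.W x y l) - (1/2^n)*d ≤ dist z (H.W x y (q n)) := fun n => by
      have := (abs_le.mp (hb n)).1; linarith
    refine tendsto_of_tendsto_of_tendsto_of_le_of_le ?_ ?_ hlo hup
    · simpa using (tendsto_const_nhds (x := dist z (H.W x y l))).sub (hhalf.mul_const d)
    · simpa using (tendsto_const_nhds (x := dist z (H.W x y l))).add (hhalf.mul_const d)
  have hgq_tendsto : Filter.Tendsto (fun n => g (q n)) Filter.atTop (nhds (g l)) := by
    simp only [hg]
    exact (hD_tendsto.pow 2).add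
      (((hq_tendsto.mul ((tendsto_const_nhds (x := (1:ℝ))).sub hq_tendsto))).mul_const (d^2))
  have hrhs_tendsto : Filter.Tendsto (fun n => (1 - q n) * g 0 + q n * g 1)
      Filter.atTop (nhds ((1 - l) * g 0 + l * g 1)) := by
    exact ((((tendsto_const_nhds (x := (1:ℝ))).sub hq_tendsto).mul_const (g 0))).add
      (hq_tendsto.mul_const (g 1))
  have hfin : g l ≤ (1 - l) * g 0 + l * g 1 := by
    refine le_of_tendsto_of_tendsto' hgq_tendsto hrhs_tendsto fun n => ?_
    have := hdyadic n ⌊l * 2^n⌋₊ (hqk n)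
    simpa [hq] using this
  rw [hg0, hg1] at hfin
  simp only [hg] at hfin
  linarith

end CAT0

lemma xu_lemma {a b c t : ℕ → ℝ} {B : ℝ}
    (ha0 : ∀ n, 0 ≤ a n) (haB : ∀ n, a n ≤ B)
    (ht : ∀ n, t (n+1) ∈ Set.Icc (0:ℝ) 1)
    (htdiv : Tendsto (fun N => ∑ k ∈ Finset.Icc 1 N, t k) atTop atTop)
    (hb : ∀ ε > 0, ∀ᶠ n in atTop, b n ≤ ε)
    (hc0 : ∀ n, 0 ≤ c n) (hc : Summable c)
    (hrec : ∀ n, a (n+1) ≤ (1 - t (n+1)) * a n + t (n+1) * b n + c n) :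
    Tendsto a atTop (nhds 0) := by
  have hB0 : 0 ≤ B := le_trans (ha0 0) (haB 0)
  rw [Metric.tendsto_atTop]
  intro ε hε
  set ε' := ε/4 with hε'
  have hε'0 : 0 < ε' := by positivity
  obtain ⟨N₁, hN₁⟩ := eventually_atTop.mp (hb ε' hε'0)
  have htail : Tendsto (fun i => ∑' k, c (k + i)) atTop (nhds 0) := tendsto_sum_nat_add c
  obtain ⟨N₂, hN₂⟩ := eventually_atTop.mp (htail.eventually (eventually_lt_nhds hε'0))
  set N := max N₁ N₂ with hN
  set P : ℕ → ℝ := fun m => ∏ k ∈ Finset.Icc (N+1) (N+m), (1 - t k) with hP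
  have ht' : ∀ k, 1 ≤ k → t k ∈ Set.Icc (0:ℝ) 1 := by
    intro k hk
    obtain ⟨j, rfl⟩ : ∃ j, k = j + 1 := ⟨k - 1, by omega⟩
    exact ht j
  have hSnn : ∀ m, 0 ≤ ∑ k ∈ Finset.Ico N (N+m), c k :=
    fun m => Finset.sum_nonneg fun k _ => hc0 k
  have claim : ∀ m, a (N+m) ≤ B * P m + ε' + ∑ k ∈ Finset.Ico N (N+m), c k := by
    intro m
    induction m with
    | zero =>
      have hP0 : P 0 = 1 := by
        simp only [hP, Nat.add_zero]
        rw [Finset.Icc_eq_empty (by omega), Finset.prod_empty]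
      rw [hP0]
      simp only [Nat.add_zero, Finset.Ico_self, Finset.sum_empty]
      have := haB N
      linarith
    | succ m ih =>
      have hrec' := hrec (N+m)
      have hτ := ht (N+m)
      set τ := t (N+m+1) with hτdef
      have hb' : b (N+m) ≤ ε' := hN₁ (N+m) (le_trans (hN ▸ le_max_left N₁ N₂) (Nat.le_add_right N m))
      have hPs : P (m+1) = P m * (1 - τ) := by
        simp only [hP]
        rw [show N + (m+1) = (N+m) + 1 by omega, Finset.prod_Icc_succ_top (by omega)]
      have hSs : ∑ k ∈ Finset.Ico N (N+(m+1)), c k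
          = (∑ k ∈ Finset.Ico N (N+m), c k) + c (N+m) := by
        rw [show N + (m+1) = (N+m) + 1 by omega, Finset.sum_Ico_succ_top (by omega)]
      rw [show N + (m+1) = (N+m) + 1 by omega] at *
      rw [hSs]
      have h1 : (1 - τ) * a (N+m) ≤ (1 - τ) * (B * P m + ε' + ∑ k ∈ Finset.Ico N (N+m), c k) :=
        mul_le_mul_of_nonneg_left ih (by linarith [hτ.2])
      have h2 : τ * b (N+m) ≤ τ * ε' := mul_le_mul_of_nonneg_left hb' hτ.1
      have h3 := hSnn m
      nlinarith [hrec', h1, h2, hτ.1, hτ.2, hε'0]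
  have hSbound : ∀ m, ∑ k ∈ Finset.Ico N (N+m), c k ≤ ε' := by
    intro m
    have hcs : Summable fun i => c (i + N) := (summable_nat_add_iff N).2 hc
    have h1 : ∑ k ∈ Finset.Ico N (N+m), c k = ∑ i ∈ Finset.range m, c (i + N) := by
      rw [Finset.sum_Ico_eq_sum_range]
      simp only [Nat.add_sub_cancel_left]
      exact Finset.sum_congr rfl fun i _ => by rw [Nat.add_comm]
    rw [h1]
    refine le_trans (Summable.sum_le_tsum _ (fun i _ => hc0 _) hcs) ?_
    exact le_of_lt (hN₂ N (hN ▸ le_max_right N₁ N₂))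
  have hPnn : ∀ m, 0 ≤ P m :=
    fun m => Finset.prod_nonneg fun k hk => by
      have := (ht' k (by simp [Finset.mem_Icc] at hk; omega)).2
      linarith
  have hPle : ∀ m, P m ≤ Real.exp (-(∑ k ∈ Finset.Icc (N+1) (N+m), t k)) := by
    intro m
    have : ∀ k ∈ Finset.Icc (N+1) (N+m), (1 - t k) ≤ Real.exp (-(t k)) := by
      intro k _
      linarith [Real.add_one_le_exp (-(t k))]
    calc P m ≤ ∏ k ∈ Finset.Icc (N+1) (N+m), Real.exp (-(t k)) := by
          refine Finset.prod_le_prod ?_ this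
          intro k hk
          have := (ht' k (by simp [Finset.mem_Icc] at hk; omega)).2
          linarith
      _ = Real.exp (∑ k ∈ Finset.Icc (N+1) (N+m), -(t k)) := (Real.exp_sum _ _).symm
      _ = Real.exp (-(∑ k ∈ Finset.Icc (N+1) (N+m), t k)) := by rw [Finset.sum_neg_distrib]
  have hsumdiv : Tendsto (fun m => ∑ k ∈ Finset.Icc (N+1) (N+m), t k) atTop atTop := by
    have heq : ∀ m, ∑ k ∈ Finset.Icc (N+1) (N+m), t k
        = (∑ k ∈ Finset.Icc 1 (N+m), t k) - ∑ k ∈ Finset.Icc 1 N, t k := by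
      intro m
      have h := Finset.sum_Ico_consecutive t (show 1 ≤ N+1 by omega) (show N+1 ≤ N+m+1 by omega)
      rw [Finset.Ico_add_one_right_eq_Icc, Finset.Ico_add_one_right_eq_Icc, Finset.Ico_add_one_right_eq_Icc] at h
      linarith
    have h2 : Tendsto (fun m => ∑ k ∈ Finset.Icc 1 (N+m), t k) atTop atTop := by
      have := htdiv.comp (tendsto_add_atTop_nat N)
      refine this.congr fun m => ?_
      simp [Function.comp, Nat.add_comm]
    simpa only [heq, sub_eq_add_neg] using h2.atTop_add tendsto_const_nhds
  have hPz : Tendsto P atTop (nhds 0) := by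
    refine tendsto_of_tendsto_of_tendsto_of_le_of_le (g := fun _ => (0:ℝ))
      (h := fun m => Real.exp (-∑ k ∈ Finset.Icc (N+1) (N+m), t k))
      tendsto_const_nhds ?_ hPnn hPle
    exact Real.tendsto_exp_neg_atTop_nhds_zero.comp hsumdiv
  have hBP : Tendsto (fun m => B * P m) atTop (nhds 0) := by
    simpa using hPz.const_mul B
  obtain ⟨m₀, hm₀⟩ := eventually_atTop.mp (hBP.eventually (eventually_lt_nhds hε'0))
  refine ⟨N + m₀, fun n hn => ?_⟩
  have hm : ∃ m, m ≥ m₀ ∧ n = N + m := ⟨n - N, by omega, by omega⟩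
  obtain ⟨m, hmm, rfl⟩ := hm
  have h1 := claim m
  have h2 := hSbound m
  have h3 : B * P m < ε' := hm₀ m hmm
  rw [Real.dist_eq, sub_zero, abs_of_nonneg (ha0 _)]
  calc a (N+m) ≤ B * P m + ε' + _ := h1
    _ < ε' + ε' + ε' := by linarith
    _ < ε := by rw [hε']; linarith

open Filter in
set_option maxHeartbeats 1000000 in
theorem stmt18 {X : Type*} [MetricSpace X] [CompleteSpace X] (H : CAT0 X) (C : Set X)
    (hC : IsClosed C) (hconv : ∀ x ∈ C, ∀ y ∈ C, ∀ l : ℝ, l ∈ Set.Icc (0:ℝ) 1 → H.W x y l ∈ C)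
    (hbdd : Bornology.IsBounded C)
    (T : X → X) (hTC : ∀ x ∈ C, T x ∈ C)
    (hT : ∀ x ∈ C, ∀ y ∈ C, dist (T x) (T y) ≤ dist x y)
    (u x0 : X) (hu : u ∈ C) (hx0 : x0 ∈ C)
    (lam : ℕ → ℝ) (hlam : ∀ n, 1 ≤ n → lam n ∈ Set.Icc (0:ℝ) 1)
    (hC1 : Filter.Tendsto lam Filter.atTop (nhds 0))
    (hC2 : Summable (fun n : ℕ => |lam (n+2) - lam (n+1)|))
    (hC3 : Filter.Tendsto (fun N => ∑ k ∈ Finset.Icc 1 N, lam k) Filter.atTop Filter.atTop)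
    (x : ℕ → X) (hx : x 0 = x0)
    (hiter : ∀ n : ℕ, x (n+1) = H.W u (T (x n)) (1 - lam (n+1))) :
    CauchySeq x := by
  classical
  -- bound on C
  obtain ⟨M0, hM0⟩ := Metric.isBounded_iff.mp hbdd
  set M : ℝ := max M0 1 with hMdef
  have hM : ∀ p ∈ C, ∀ q ∈ C, dist p q ≤ M := fun p hp q hq =>
    le_trans (hM0 hp hq) (le_max_left _ _)
  have hM1 : (1:ℝ) ≤ M := le_max_right _ _
  have hMpos : (0:ℝ) < M := by linarith
  have hlam' : ∀ n, lam (n+1) ∈ Set.Icc (0:ℝ) 1 := fun n => hlam (n+1) (by omega)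
  have hl1 : ∀ n, (1 - lam (n+1)) ∈ Set.Icc (0:ℝ) 1 :=
    fun n => ⟨by linarith [(hlam' n).2], by linarith [(hlam' n).1]⟩
  have hxC : ∀ n, x n ∈ C := by
    intro n
    induction n with
    | zero => rw [hx]; exact hx0
    | succ n ih =>
      rw [hiter n]
      exact hconv u hu (T (x n)) (hTC _ ih) _ (hl1 n)
  have hTxC : ∀ n, T (x n) ∈ C := fun n => hTC _ (hxC n)
  have hlamshift : Tendsto (fun n => lam (n+1)) atTop (nhds 0) :=
    hC1.comp (tendsto_add_atTop_nat 1)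
  -- successive distances tend to 0
  set a : ℕ → ℝ := fun n => dist (x (n+1)) (x n) with ha
  have hstep : Tendsto a atTop (nhds 0) := by
    have hrec : ∀ n, a (n+1) ≤ (1 - lam (n+2)) * a n + lam (n+2) * 0
        + M * |lam (n+2) - lam (n+1)| := by
      intro n
      have e1 : dist (x (n+2)) (x (n+1)) ≤
          dist (H.W u (T (x (n+1))) (1 - lam (n+2))) (H.W u (T (x n)) (1 - lam (n+2)))
          + dist (H.W u (T (x n)) (1 - lam (n+2))) (H.W u (T (x n)) (1 - lam (n+1))) := by
        rw [hiter (n+1), hiter n]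
        exact dist_triangle _ _ _
      have e2 : dist (H.W u (T (x (n+1))) (1 - lam (n+2))) (H.W u (T (x n)) (1 - lam (n+2)))
          ≤ (1 - (1 - lam (n+2))) * dist u u + (1 - lam (n+2)) * dist (T (x (n+1))) (T (x n)) :=
        H.W4 u u (T (x (n+1))) (T (x n)) _ (hl1 (n+1))
      rw [dist_self, mul_zero, zero_add] at e2
      have e3 : dist (H.W u (T (x n)) (1 - lam (n+2))) (H.W u (T (x n)) (1 - lam (n+1)))
          = |(1 - lam (n+2)) - (1 - lam (n+1))| * dist u (T (x n)) :=
        H.W2 u (T (x n)) _ _ (hl1 (n+1)) (hl1 n)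
      have e4 : |(1 - lam (n+2)) - (1 - lam (n+1))| = |lam (n+2) - lam (n+1)| := by
        rw [show (1 - lam (n+2)) - (1 - lam (n+1)) = -(lam (n+2) - lam (n+1)) by ring, abs_neg]
      have e5 : dist (T (x (n+1))) (T (x n)) ≤ a n := hT _ (hxC (n+1)) _ (hxC n)
      have e6 : dist u (T (x n)) ≤ M := hM u hu _ (hTxC n)
      have e7 : (0:ℝ) ≤ 1 - lam (n+2) := (hl1 (n+1)).1
      have e8 : (0:ℝ) ≤ |lam (n+2) - lam (n+1)| := abs_nonneg _
      have : a (n+1) = dist (x (n+2)) (x (n+1)) := rfl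
      rw [this, mul_zero, add_zero]
      calc dist (x (n+2)) (x (n+1)) ≤ _ + _ := e1
        _ ≤ (1 - lam (n+2)) * a n + M * |lam (n+2) - lam (n+1)| := by
            rw [e3, e4]
            have := mul_le_mul_of_nonneg_left e5 e7
            have := mul_le_mul_of_nonneg_right e6 e8
            nlinarith [e2]
    have htdiv : Tendsto (fun N => ∑ k ∈ Finset.Icc 1 N, lam (k+1)) atTop atTop := by
      have key : ∀ N, ∑ k ∈ Finset.Icc 1 N, lam (k+1)
          = (∑ k ∈ Finset.Icc 1 (N+1), lam k) - lam 1 := by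
        intro N
        induction N with
        | zero => simp
        | succ N ih =>
          rw [Finset.sum_Icc_succ_top (by omega) (fun k => lam (k+1)), ih,
            show N + 1 + 1 = (N+1) + 1 from rfl,
            Finset.sum_Icc_succ_top (show 1 ≤ N + 1 + 1 by omega) lam]
          ring
      have h2 : Tendsto (fun N => ∑ k ∈ Finset.Icc 1 (N+1), lam k) atTop atTop :=
        hC3.comp (tendsto_add_atTop_nat 1)
      have h3 := tendsto_atTop_add_const_right atTop (-(lam 1)) h2
      refine h3.congr fun N => ?_
      rw [key N]; ring
    refine xu_lemma (B := M) (fun n => dist_nonneg) (fun n => hM _ (hxC (n+1)) _ (hxC n))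
      (fun n => hlam' (n+1)) htdiv (fun ε hε => Eventually.of_forall fun n => le_of_lt hε)
      (fun n => by positivity) (hC2.mul_left M) hrec
  -- asymptotic regularity
  set epsn : ℕ → ℝ := fun n => dist (x n) (T (x n)) with hepsn
  have hdTx : ∀ n, dist (x (n+1)) (T (x n)) = lam (n+1) * dist u (T (x n)) := by
    intro n
    rw [hiter n, H.toWHyperbolic.dist_right u (T (x n)) (hl1 n)]
    ring_nf
  have heps_le : ∀ n, epsn n ≤ a n + lam (n+1) * M := by
    intro n
    have h1 : dist (x n) (T (x n)) ≤ dist (x n) (x (n+1)) + dist (x (n+1)) (T (x n)) :=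
      dist_triangle _ _ _
    rw [hdTx n, dist_comm (x n) (x (n+1))] at h1
    have h2 : lam (n+1) * dist u (T (x n)) ≤ lam (n+1) * M :=
      mul_le_mul_of_nonneg_left (hM u hu _ (hTxC n)) (hlam' n).1
    exact le_trans h1 (by linarith)
  have hepsz : Tendsto epsn atTop (nhds 0) := by
    refine tendsto_of_tendsto_of_tendsto_of_le_of_le (g := fun _ => (0:ℝ))
      (h := fun n => a n + lam (n+1) * M) tendsto_const_nhds ?_
      (fun n => dist_nonneg) heps_le
    simpa using hstep.add (hlamshift.mul_const M)
  -- liminf of distances to u, and a subsequence approaching it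
  set D : ℕ → ℝ := fun n => dist u (x n) ^ 2 with hD
  have hD0 : ∀ n, 0 ≤ D n := fun n => by positivity
  have hDM : ∀ n, D n ≤ M^2 := fun n =>
    pow_le_pow_left₀ dist_nonneg (hM u hu _ (hxC n)) 2
  set L : ℝ := liminf D atTop with hL
  have hLfreq : ∀ ε : ℝ, 0 < ε → ∃ᶠ n in atTop, D n < L + ε := by
    intro ε hε
    exact frequently_lt_of_liminf_lt (isCoboundedUnder_ge_of_le atTop hDM)
      (by linarith [le_refl L])
  obtain ⟨φ, hφmono, hφD⟩ : ∃ φ : ℕ → ℕ, StrictMono φ ∧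
      ∀ k, D (φ k) < L + 1/((k:ℝ)+1) := by
    have hex : ∀ m k : ℕ, ∃ n, m ≤ n ∧ D n < L + 1/((k:ℝ)+1) := by
      intro m k
      have := hLfreq (1/((k:ℝ)+1)) (by positivity)
      obtain ⟨n, hn1, hn2⟩ := (frequently_atTop.mp this) m
      exact ⟨n, hn1, hn2⟩
    choose f hf1 hf2 using hex
    refine ⟨fun k => Nat.rec (f 0 0) (fun k ih => f (ih + 1) (k+1)) k,
      strictMono_nat_of_lt_succ fun k => ?_, fun k => ?_⟩
    · exact Nat.lt_of_succ_le (hf1 _ (k+1))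
    · cases k with
      | zero => exact hf2 0 0
      | succ k => exact hf2 _ (k+1)
  set y : ℕ → X := fun k => x (φ k) with hy
  have hyC : ∀ k, y k ∈ C := fun k => hxC (φ k)
  have hφtop : Tendsto φ atTop atTop := hφmono.tendsto_atTop
  -- the asymptotic-radius functional
  set Φ : X → ℝ := fun p => limsup (fun k => dist (y k) p ^ 2) atTop with hΦ
  have hsqM : ∀ p ∈ C, ∀ k, dist (y k) p ^ 2 ≤ M^2 := fun p hp k =>
    pow_le_pow_left₀ dist_nonneg (hM _ (hyC k) p hp) 2
  have hΦ0 : ∀ p ∈ C, 0 ≤ Φ p := fun p hp =>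
    hlp_le_limsup (hsqM p hp) (Eventually.of_forall fun k => by positivity)
  have hΦM : ∀ p ∈ C, Φ p ≤ M^2 := fun p hp =>
    hlp_limsup_le (K := 0) (fun k => by positivity) (Eventually.of_forall (hsqM p hp))
  have hΦu : Φ u ≤ L := by
    refine le_of_forall_pos_le_add fun ε hε => ?_
    refine hlp_limsup_le (K := 0) (fun k => by positivity) ?_
    have hev : ∀ᶠ k : ℕ in atTop, 1/((k:ℝ)+1) ≤ ε := by
      have := tendsto_one_div_add_atTop_nhds_zero_nat.eventually (eventually_lt_nhds hε)
      exact this.mono fun k hk => le_of_lt hk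
    filter_upwards [hev] with k hk
    have := hφD k
    rw [dist_comm (y k) u]
    calc dist u (y k) ^ 2 = D (φ k) := rfl
      _ ≤ L + 1/((k:ℝ)+1) := le_of_lt this
      _ ≤ L + ε := by linarith
  -- CN inequality for Φ at midpoints
  have hΦmid : ∀ p ∈ C, ∀ q ∈ C, Φ (H.W p q (1/2))
      ≤ (1 - 1/2) * Φ p + (1/2) * Φ q + (-((1/4) * dist p q ^ 2)) := by
    intro p hp q hq
    refine hlp_limsup_comb (by norm_num) (by norm_num) (kf := 0)
      (fun k => by positivity) (hsqM p hp) (hsqM q hq) ?_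
    refine Eventually.of_forall fun k => ?_
    have := H.CN p q (y k)
    linarith
  -- star inequality for Φ
  have hΦstar : ∀ p ∈ C, ∀ q ∈ C, ∀ l : ℝ, l ∈ Set.Icc (0:ℝ) 1 → Φ (H.W p q l)
      ≤ (1 - l) * Φ p + l * Φ q + (-(l * (1 - l) * dist p q ^ 2)) := by
    intro p hp q hq l hl
    refine hlp_limsup_comb hl.1 hl.2 (kf := 0)
      (fun k => by positivity) (hsqM p hp) (hsqM q hq) ?_
    refine Eventually.of_forall fun k => ?_
    have := H.star p q (y k) hl
    linarith
  -- "Lipschitz" comparison for Φ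
  have hΦcomp : ∀ p ∈ C, ∀ q ∈ C, Φ p ≤ Φ q + dist p q * (2*M + dist p q) := by
    intro p hp q hq
    have key : ∀ k, dist (y k) p ^ 2 ≤ (1 - 0) * dist (y k) q ^ 2 + 0 * dist (y k) q ^ 2
        + dist p q * (2*M + dist p q) := by
      intro k
      have h1 : dist (y k) p ≤ dist (y k) q + dist q p := dist_triangle _ _ _
      have h2 : dist (y k) q ≤ M := hM _ (hyC k) q hq
      rw [dist_comm q p] at h1
      have h4 : (0:ℝ) ≤ dist p q := dist_nonneg
      have h5 : dist (y k) p ^ 2 ≤ (dist (y k) q + dist p q) ^ 2 :=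
        pow_le_pow_left₀ dist_nonneg h1 2
      have h6 : dist p q * dist (y k) q ≤ dist p q * M :=
        mul_le_mul_of_nonneg_left h2 h4
      nlinarith [h5, h6]
    have := hlp_limsup_comb (f := fun k => dist (y k) p ^ 2)
      (A := fun k => dist (y k) q ^ 2) (B := fun k => dist (y k) q ^ 2)
      (l := 0) (c := dist p q * (2*M + dist p q)) le_rfl zero_le_one (kf := 0)
      (fun k => by positivity) (hsqM q hq) (hsqM q hq)
      (Eventually.of_forall key)
    simpa using this
  -- minimizer of Φ over C
  set m : ℝ := sInf (Φ '' C) with hm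
  have hCne : (Φ '' C).Nonempty := ⟨Φ u, ⟨u, hu, rfl⟩⟩
  have hbb : BddBelow (Φ '' C) := ⟨0, fun v ⟨p, hp, he⟩ => he ▸ hΦ0 p hp⟩
  have hm_le : ∀ p ∈ C, m ≤ Φ p := fun p hp => csInf_le hbb ⟨p, hp, rfl⟩
  have hws : ∀ j : ℕ, ∃ w, w ∈ C ∧ Φ w < m + 1/((j:ℝ)+1) := by
    intro j
    have hjp : (0:ℝ) < 1/((j:ℝ)+1) := by positivity
    obtain ⟨v, ⟨p, hp, rfl⟩, hv⟩ := exists_lt_of_csInf_lt hCne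
      (show m < m + 1/((j:ℝ)+1) by linarith)
    exact ⟨p, hp, hv⟩
  choose w hwC hwm using hws
  have hwdist : ∀ i j : ℕ, dist (w i) (w j) ^ 2 ≤ 4*(1/((i:ℝ)+1) + 1/((j:ℝ)+1)) := by
    intro i j
    have h1 := hΦmid (w i) (hwC i) (w j) (hwC j)
    have h2 : m ≤ Φ (H.W (w i) (w j) (1/2)) :=
      hm_le _ (hconv _ (hwC i) _ (hwC j) _ (by norm_num))
    have h3 := hwm i
    have h4 := hwm j
    nlinarith
  have hwCauchy : CauchySeq w := by
    rw [Metric.cauchySeq_iff]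
    intro ε hε
    obtain ⟨N, hN⟩ := exists_nat_gt (8/ε^2)
    refine ⟨N + 1, fun i hi j hj => ?_⟩
    have hNp : (0:ℝ) < (N:ℝ) + 1 := by positivity
    have hi' : (1:ℝ)/((i:ℝ)+1) ≤ 1/((N:ℝ)+1) := by
      apply one_div_le_one_div_of_le hNp
      have : (N:ℝ) + 1 ≤ (i:ℝ) := by exact_mod_cast hi
      linarith
    have hj' : (1:ℝ)/((j:ℝ)+1) ≤ 1/((N:ℝ)+1) := by
      apply one_div_le_one_div_of_le hNp
      have : (N:ℝ) + 1 ≤ (j:ℝ) := by exact_mod_cast hj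
      linarith
    have h8 : 8/((N:ℝ)+1) < ε^2 := by
      rw [div_lt_iff₀ hNp]
      have hε2 : (0:ℝ) < ε^2 := by positivity
      have h1 : 8/ε^2 < (N:ℝ) := hN
      have := (div_lt_iff₀ hε2).mp h1
      nlinarith
    have := hwdist i j
    have hd2 : dist (w i) (w j) ^ 2 < ε ^ 2 := by
      calc dist (w i) (w j) ^ 2 ≤ 4*(1/((i:ℝ)+1) + 1/((j:ℝ)+1)) := this
        _ ≤ 8/((N:ℝ)+1) := by rw [show (8:ℝ)/((N:ℝ)+1) = 4*(1/((N:ℝ)+1) + 1/((N:ℝ)+1)) by ring]; linarith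
        _ < ε^2 := h8
    exact lt_of_pow_lt_pow_left₀ 2 (le_of_lt hε) hd2
  obtain ⟨z, hz⟩ := cauchySeq_tendsto_of_complete hwCauchy
  have hzC : z ∈ C := hC.mem_of_tendsto hz (Eventually.of_forall hwC)
  have hwz : Tendsto (fun j => dist z (w j)) atTop (nhds 0) := by
    have := (tendsto_iff_dist_tendsto_zero).mp hz
    refine this.congr fun j => ?_
    rw [dist_comm]
  -- Φ z is minimal
  have hΦz_min : ∀ p ∈ C, Φ z ≤ Φ p := by
    intro p hp
    have h1 : ∀ j : ℕ, Φ z ≤ (m + 1/((j:ℝ)+1)) + dist z (w j) * (2*M + dist z (w j)) := by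
      intro j
      refine le_trans (hΦcomp z hzC (w j) (hwC j)) ?_
      have := hwm j
      linarith
    have h2 : Tendsto (fun j : ℕ => (m + 1/((j:ℝ)+1)) + dist z (w j) * (2*M + dist z (w j)))
        atTop (nhds ((m + 0) + 0 * (2*M + 0))) := by
      refine Tendsto.add ?_ ?_
      · exact (tendsto_const_nhds).add tendsto_one_div_add_atTop_nhds_zero_nat
      · exact hwz.mul ((tendsto_const_nhds).add hwz)
    have h3 : Φ z ≤ (m + 0) + 0 * (2*M + 0) := ge_of_tendsto h2 (Eventually.of_forall h1)
    have h4 : Φ z ≤ m := by linarith [h3]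
    exact le_trans h4 (hm_le p hp)
  -- z is a fixed point of T
  have hfix : T z = z := by
    have hek : Tendsto (fun k => epsn (φ k) * (2*M + epsn (φ k))) atTop (nhds (0*(2*M+0))) := by
      have he : Tendsto (fun k => epsn (φ k)) atTop (nhds 0) := hepsz.comp hφtop
      exact he.mul ((tendsto_const_nhds).add he)
    rw [zero_mul] at hek
    have hΦTz : Φ (T z) ≤ Φ z := by
      refine le_of_forall_pos_le_add fun δ hδ => ?_
      have hev : ∀ᶠ k in atTop, epsn (φ k) * (2*M + epsn (φ k)) ≤ δ :=
        (hek.eventually (eventually_lt_nhds hδ)).mono fun k hk => le_of_lt hk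
      have key : ∀ᶠ k in atTop, dist (y k) (T z) ^ 2 ≤ (1 - 0) * dist (y k) z ^ 2
          + 0 * dist (y k) z ^ 2 + δ := by
        filter_upwards [hev] with k hk
        have h1 : dist (y k) (T z) ≤ epsn (φ k) + dist (y k) z := by
          have := dist_triangle (y k) (T (y k)) (T z)
          have h2 : dist (T (y k)) (T z) ≤ dist (y k) z := hT _ (hyC k) z hzC
          have h3 : dist (y k) (T (y k)) = epsn (φ k) := rfl
          linarith
        have h2 : dist (y k) z ≤ M := hM _ (hyC k) z hzC
        have h4 : (0:ℝ) ≤ epsn (φ k) := dist_nonneg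
        have h5 : dist (y k) (T z) ^ 2 ≤ (epsn (φ k) + dist (y k) z) ^ 2 :=
          pow_le_pow_left₀ dist_nonneg h1 2
        have h6 : epsn (φ k) * dist (y k) z ≤ epsn (φ k) * M :=
          mul_le_mul_of_nonneg_left h2 h4
        nlinarith [h5, h6, hk]
      have := hlp_limsup_comb (f := fun k => dist (y k) (T z) ^ 2)
        (A := fun k => dist (y k) z ^ 2) (B := fun k => dist (y k) z ^ 2)
        (l := 0) (c := δ) le_rfl zero_le_one (kf := 0)
        (fun k => by positivity) (hsqM z hzC) (hsqM z hzC) key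
      simpa using this
    have hmidC : H.W z (T z) (1/2) ∈ C := hconv z hzC _ (hTC z hzC) _ (by norm_num)
    have h1 := hΦmid z hzC (T z) (hTC z hzC)
    have h2 := hΦz_min _ hmidC
    have h3 : dist z (T z) ^ 2 ≤ 0 := by nlinarith
    have h4 : dist z (T z) = 0 := by nlinarith [dist_nonneg (x := z) (y := T z)]
    rw [dist_comm] at h4
    exact dist_eq_zero.mp h4
  -- key inequality : dist u z ^ 2 ≤ L
  have hkey : dist u z ^ 2 ≤ L := by
    have hstep' : ∀ l : ℝ, 0 ≤ l → l < 1 → Φ z + l * dist u z ^ 2 ≤ Φ u := by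
      intro l hl0 hl1'
      have hlm : l ∈ Set.Icc (0:ℝ) 1 := ⟨hl0, le_of_lt hl1'⟩
      have hWC : H.W u z l ∈ C := hconv u hu z hzC l hlm
      have h1 := hΦstar u hu z hzC l hlm
      have h2 : Φ z ≤ Φ (H.W u z l) := hΦz_min _ hWC
      have h3 : (0:ℝ) < 1 - l := by linarith
      have h4 : (1 - l) * (Φ z + l * dist u z ^ 2) ≤ (1 - l) * Φ u := by nlinarith
      exact le_of_mul_le_mul_left h4 h3
    have hseq : ∀ k : ℕ, Φ z + (1 - 1/((k:ℝ)+1)) * dist u z ^ 2 ≤ Φ u := by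
      intro k
      have hk1 : (0:ℝ) < 1/((k:ℝ)+1) := by positivity
      have hk2 : (1:ℝ)/((k:ℝ)+1) ≤ 1 := by
        rw [div_le_one (by positivity)]
        have : (0:ℝ) ≤ (k:ℝ) := Nat.cast_nonneg k
        linarith
      exact hstep' _ (by linarith) (by linarith)
    have hlim : Tendsto (fun k : ℕ => Φ z + (1 - 1/((k:ℝ)+1)) * dist u z ^ 2) atTop
        (nhds (Φ z + (1 - 0) * dist u z ^ 2)) := by
      refine Tendsto.add tendsto_const_nhds ?_
      exact ((tendsto_const_nhds).sub tendsto_one_div_add_atTop_nhds_zero_nat).mul_const _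
    have h5 : Φ z + (1 - 0) * dist u z ^ 2 ≤ Φ u := le_of_tendsto hlim (Eventually.of_forall hseq)
    have h6 := hΦ0 z hzC
    have h7 := hΦu
    linarith
  -- final recursion
  set A : ℕ → ℝ := fun n => dist (x n) z ^ 2 with hA
  set bseq : ℕ → ℝ := fun n => dist u z ^ 2 - (1 - lam (n+1)) * dist u (T (x n)) ^ 2 with hbs
  have hArec : ∀ n, A (n+1) ≤ (1 - lam (n+1)) * A n + lam (n+1) * bseq n + 0 := by
    intro n
    have hstar := H.star u (T (x n)) z (hl1 n)
    rw [← hiter n] at hstar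
    have h1 : dist z (T (x n)) ≤ dist z (x n) := by
      have := hT z hzC (x n) (hxC n)
      rw [hfix] at this
      exact this
    have h2 : dist z (T (x n)) ^ 2 ≤ dist z (x n) ^ 2 :=
      pow_le_pow_left₀ dist_nonneg h1 2
    have h3 : A (n+1) = dist z (x (n+1)) ^ 2 := by rw [hA]; simp only; rw [dist_comm]
    have h4 : A n = dist z (x n) ^ 2 := by rw [hA]; simp only; rw [dist_comm]
    have h5 : dist z u = dist u z := dist_comm z u
    have hlb := (hlam' n).1
    have hub := (hlam' n).2
    rw [h3, h4, hbs]
    simp only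
    have h5sq : dist z u ^ 2 = dist u z ^ 2 := by rw [dist_comm]
    have hmul : (1 - lam (n+1)) * dist z (T (x n)) ^ 2 ≤ (1 - lam (n+1)) * dist z (x n) ^ 2 :=
      mul_le_mul_of_nonneg_left h2 (by linarith)
    nlinarith [hstar, hmul, h5sq]
  have hbseq : ∀ ε : ℝ, 0 < ε → ∀ᶠ n in atTop, bseq n ≤ ε := by
    intro ε hε
    have h1 : ∀ᶠ n in atTop, L - ε/3 < D n := by
      refine eventually_lt_of_lt_liminf (by linarith [le_refl L]) ?_
      exact ⟨0, eventually_map.2 (Eventually.of_forall hD0)⟩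
    have h2 : ∀ᶠ n in atTop, 2*M*epsn n ≤ ε/3 := by
      have : Tendsto (fun n => 2*M*epsn n) atTop (nhds (2*M*0)) := hepsz.const_mul (2*M)
      rw [mul_zero] at this
      exact (this.eventually (eventually_lt_nhds (by linarith))).mono fun n h => le_of_lt h
    have h3 : ∀ᶠ n in atTop, lam (n+1) * M^2 ≤ ε/3 := by
      have : Tendsto (fun n => lam (n+1) * M^2) atTop (nhds (0 * M^2)) :=
        hlamshift.mul_const _
      rw [zero_mul] at this
      exact (this.eventually (eventually_lt_nhds (by linarith))).mono fun n h => le_of_lt h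
    filter_upwards [h1, h2, h3] with n h1 h2 h3
    have hq : D n - dist u (T (x n)) ^ 2 ≤ 2*M*epsn n := by
      have hfac : D n - dist u (T (x n)) ^ 2
          = (dist u (x n) - dist u (T (x n))) * (dist u (x n) + dist u (T (x n))) := by
        rw [hD]; ring
      have habs : dist u (x n) - dist u (T (x n)) ≤ epsn n := by
        have := dist_triangle u (T (x n)) (x n)
        have hc : dist (T (x n)) (x n) = epsn n := dist_comm (T (x n)) (x n) ▸ rfl
        linarith
      have hsum0 : (0:ℝ) ≤ dist u (x n) + dist u (T (x n)) :=
        add_nonneg dist_nonneg dist_nonneg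
      have hsum : dist u (x n) + dist u (T (x n)) ≤ 2*M := by
        have := hM u hu _ (hxC n)
        have := hM u hu _ (hTxC n)
        linarith
      have hepsnn : (0:ℝ) ≤ epsn n := dist_nonneg
      rw [hfac]
      calc (dist u (x n) - dist u (T (x n))) * (dist u (x n) + dist u (T (x n)))
          ≤ epsn n * (dist u (x n) + dist u (T (x n))) :=
            mul_le_mul_of_nonneg_right habs hsum0
        _ ≤ epsn n * (2*M) := mul_le_mul_of_nonneg_left hsum hepsnn
        _ = 2*M*epsn n := by ring
    have hlM : lam (n+1) * dist u (T (x n)) ^ 2 ≤ lam (n+1) * M^2 := by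
      refine mul_le_mul_of_nonneg_left ?_ (hlam' n).1
      exact pow_le_pow_left₀ dist_nonneg (hM u hu _ (hTxC n)) 2
    rw [hbs]
    simp only
    nlinarith [hkey, h1, h2, h3, hq, hlM]
  have hAz : Tendsto A atTop (nhds 0) := by
    refine xu_lemma (B := M^2) (fun n => by positivity)
      (fun n => pow_le_pow_left₀ dist_nonneg (hM _ (hxC n) z hzC) 2)
      hlam' hC3 hbseq (fun n => le_refl 0) summable_zero hArec
  have hdistz : Tendsto (fun n => dist (x n) z) atTop (nhds 0) := by
    have hsq : Tendsto (fun n => Real.sqrt (A n)) atTop (nhds (Real.sqrt 0)) :=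
      (Real.continuous_sqrt.tendsto 0).comp hAz
    rw [Real.sqrt_zero] at hsq
    refine hsq.congr fun n => ?_
    rw [hA]
    simp only
    rw [Real.sqrt_sq dist_nonneg]
  exact ((tendsto_iff_dist_tendsto_zero).mpr hdistz).cauchySeq
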